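/- Let $A$ and $B$ be $n \times n$ complex matrices with $A$ normal and $\|[A,B]\| \leq \epsilon$. Then for any eigenvalue $\lambda$ of $A$, there exist a unit vector $|u\rangle$ and a complex number $\mu$ such that $\|A|u\rangle - \lambda|u\rangle\| \leq n\sqrt{\epsilon/2}$ and $\|B|u\rangle - \mu|u\rangle\| \leq n\sqrt{\epsilon/2}$. -/

import Mathlib

open scoped Matrix Matrix.Norms.L2Operator

/-- Reinterpret a tuple as a vector in Euclidean space (with the `ℓ²` norm). -/
def toEuc {n : ℕ} (x : Fin n → ℂ) : EuclideanSpace ℂ (Fin n) := WithLp.toLp 2 x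

namespace Stmt17

open Module.End LinearMap

variable {E : Type*} [NormedAddCommGroup E] [InnerProductSpace ℂ E] [FiniteDimensional ℂ E]
variable (T : E →ₗ[ℂ] E)

local notation "⟪" x ", " y "⟫" => @inner ℂ _ _ x y

lemma norm_adjoint_apply (hT : T ∘ₗ adjoint T = adjoint T ∘ₗ T) (x : E) :
    ‖adjoint T x‖ = ‖T x‖ := by
  have h : ⟪T x, T x⟫ = ⟪adjoint T x, adjoint T x⟫ := by
    calc ⟪T x, T x⟫ = ⟪x, adjoint T (T x)⟫ := (adjoint_inner_right T x (T x)).symm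
    _ = ⟪x, T (adjoint T x)⟫ := by
        congr 1
        have h1 := LinearMap.congr_fun hT x
        simpa only [LinearMap.comp_apply] using h1.symm
    _ = ⟪adjoint T x, adjoint T x⟫ := (adjoint_inner_left T (adjoint T x) x).symm
  have h3 : ‖adjoint T x‖ ^ 2 = ‖T x‖ ^ 2 := by
    rw [← inner_self_eq_norm_sq (𝕜 := ℂ), ← inner_self_eq_norm_sq (𝕜 := ℂ), h]
  rw [← Real.sqrt_sq (norm_nonneg (adjoint T x)), h3, Real.sqrt_sq (norm_nonneg _)]

lemma adjoint_apply_of_eigen (hT : T ∘ₗ adjoint T = adjoint T ∘ₗ T) {lam : ℂ} {x : E}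
    (hx : T x = lam • x) : adjoint T x = (starRingEnd ℂ) lam • x := by
  have hSxx : ⟪adjoint T x, x⟫ = ⟪x, T x⟫ := adjoint_inner_left T x x
  have hxSx : ⟪x, adjoint T x⟫ = ⟪T x, x⟫ := adjoint_inner_right T x x
  have e1 : ⟪adjoint T x, adjoint T x⟫ = (starRingEnd ℂ) lam * (lam * ⟪x, x⟫) := by
    have c1 := inner_self_eq_norm_sq_to_K (𝕜 := ℂ) (adjoint T x)
    have c2 := inner_self_eq_norm_sq_to_K (𝕜 := ℂ) (T x)
    rw [c1, norm_adjoint_apply T hT x, ← c2, hx, inner_smul_left, inner_smul_right]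
  have e2 : ⟪adjoint T x, (starRingEnd ℂ) lam • x⟫ = (starRingEnd ℂ) lam * (lam * ⟪x, x⟫) := by
    rw [inner_smul_right, hSxx, hx, inner_smul_right]
  have e3 : ⟪(starRingEnd ℂ) lam • x, adjoint T x⟫ = lam * ((starRingEnd ℂ) lam * ⟪x, x⟫) := by
    rw [inner_smul_left, starRingEnd_self_apply, hxSx, hx, inner_smul_left]
  have e4 : ⟪(starRingEnd ℂ) lam • x, (starRingEnd ℂ) lam • x⟫
      = lam * ((starRingEnd ℂ) lam * ⟪x, x⟫) := by
    rw [inner_smul_left, inner_smul_right, starRingEnd_self_apply]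
  have hww : ⟪adjoint T x - (starRingEnd ℂ) lam • x, adjoint T x - (starRingEnd ℂ) lam • x⟫ = 0 := by
    rw [inner_sub_left, inner_sub_right, inner_sub_right, e1, e2, e3, e4]
    ring
  have := inner_self_eq_zero.mp hww
  rwa [sub_eq_zero] at this

lemma orthogonalFamily_eigenspaces' (hT : T ∘ₗ adjoint T = adjoint T ∘ₗ T) :
    OrthogonalFamily ℂ (fun μ : Eigenvalues T => eigenspace T μ)
      (fun μ => (eigenspace T μ).subtypeₗᵢ) := by
  have base : OrthogonalFamily ℂ (fun μ : ℂ => eigenspace T μ)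
      (fun μ => (eigenspace T μ).subtypeₗᵢ) := by
    rintro μ ν hμν ⟨v, hv⟩ ⟨w, hw⟩
    rw [mem_eigenspace_iff] at hv hw
    have h1 : ⟪adjoint T v, w⟫ = ⟪v, T w⟫ := adjoint_inner_left T w v
    rw [adjoint_apply_of_eigen T hT hv, hw, inner_smul_left, inner_smul_right,
      starRingEnd_self_apply] at h1
    have h2 : (μ - ν) * ⟪v, w⟫ = 0 := by rw [sub_mul, h1]; ring
    rcases mul_eq_zero.mp h2 with h | h
    · exact absurd (sub_eq_zero.mp h) hμν
    · exact h
  exact base.comp Subtype.coe_injective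

lemma orthogonal_iSup_eigenspaces_eq_bot (hT : T ∘ₗ adjoint T = adjoint T ∘ₗ T) :
    (⨆ μ : ℂ, eigenspace T μ)ᗮ = ⊥ := by
  set p : Submodule ℂ E := ⨆ μ : ℂ, eigenspace T μ with hp
  have hinv : ∀ v ∈ pᗮ, T v ∈ pᗮ := by
    intro v hv
    rw [Submodule.mem_orthogonal] at hv ⊢
    intro u hu
    have hmaps : adjoint T u ∈ p := by
      refine Submodule.iSup_induction (motive := fun z => adjoint T z ∈ p) _ hu ?_ ?_ ?_
      · intro μ x hx
        rw [mem_eigenspace_iff] at hx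
        rw [adjoint_apply_of_eigen T hT hx]
        exact Submodule.smul_mem _ _ (le_iSup (fun μ : ℂ => eigenspace T μ) μ
          (mem_eigenspace_iff.mpr hx))
      · simpa using Submodule.zero_mem p
      · intro a b ha hb
        rw [map_add]; exact Submodule.add_mem _ ha hb
    calc ⟪u, T v⟫ = ⟪adjoint T u, v⟫ := (adjoint_inner_left T v u).symm
    _ = 0 := hv _ hmaps
  by_contra hbot
  haveI : Nontrivial pᗮ := Submodule.nontrivial_iff_ne_bot.mpr hbot
  set T' : pᗮ →ₗ[ℂ] pᗮ := T.restrict hinv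
  obtain ⟨c, hc⟩ := Module.End.exists_eigenvalue T'
  obtain ⟨v, hv⟩ := hc.exists_hasEigenvector
  have hv1 : T (v : E) = c • (v : E) := by
    have := mem_eigenspace_iff.mp hv.1
    have h2 : ((T' v : pᗮ) : E) = T (v : E) := rfl
    rw [this] at h2
    simpa using h2.symm
  have hvp : (v : E) ∈ p := le_iSup (fun μ : ℂ => eigenspace T μ) c (mem_eigenspace_iff.mpr hv1)
  have hvz : (v : E) = 0 := by
    have := v.2
    rw [Submodule.mem_orthogonal] at this
    have h0 := this (v : E) hvp
    exact inner_self_eq_zero.mp h0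
  exact hv.2 (Subtype.coe_injective hvz)

/-- Spectral theorem for normal operators: an orthonormal eigenbasis exists. -/
lemma normal_exists_onb {N : ℕ} (hN : Module.finrank ℂ E = N)
    (hT : T ∘ₗ adjoint T = adjoint T ∘ₗ T) :
    ∃ (b : OrthonormalBasis (Fin N) ℂ E) (d : Fin N → ℂ), ∀ i, T (b i) = d i • b i := by
  classical
  have horth := orthogonalFamily_eigenspaces' T hT
  have hbot : (⨆ μ : Eigenvalues T, eigenspace T μ)ᗮ = ⊥ := by
    show (⨆ μ : { μ : ℂ // eigenspace T μ ≠ ⊥ }, eigenspace T μ)ᗮ = ⊥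
    rw [iSup_ne_bot_subtype, orthogonal_iSup_eigenspaces_eq_bot T hT]
  have hint : DirectSum.IsInternal (fun μ : Eigenvalues T => eigenspace T μ) :=
    horth.isInternal_iff.mpr hbot
  refine ⟨hint.subordinateOrthonormalBasis hN horth,
    fun i => (hint.subordinateOrthonormalBasisIndex hN i horth).val, fun i => ?_⟩
  exact mem_eigenspace_iff.mp (hint.subordinateOrthonormalBasis_subordinate hN i horth)

/-- Cluster construction: a set of indices containing `i₀`, closed under `δ`-proximity
of the values `d`, and with all values within `(n-1)δ` of `d i₀`. -/
lemma cluster {n : ℕ} (hn : 0 < n) (d : Fin n → ℂ) (δ : ℝ) (hδ : 0 ≤ δ) (i₀ : Fin n) :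
    ∃ S : Finset (Fin n), i₀ ∈ S ∧
      (∀ j ∈ S, ‖d i₀ - d j‖ ≤ ((n : ℝ) - 1) * δ) ∧
      (∀ j ∈ S, ∀ m, ‖d j - d m‖ ≤ δ → m ∈ S) := by
  classical
  set f : Finset (Fin n) → Finset (Fin n) :=
    fun s => s ∪ Finset.univ.filter (fun j => ∃ i ∈ s, ‖d i - d j‖ ≤ δ) with hf
  have hsub : ∀ s, s ⊆ f s := fun s => Finset.subset_union_left
  have hmemf : ∀ s j, j ∈ f s ↔ j ∈ s ∨ ∃ i ∈ s, ‖d i - d j‖ ≤ δ := by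
    intro s j; simp [hf]
  have hcard : ∀ K : ℕ, (∀ k < K, f^[k + 1] {i₀} ≠ f^[k] {i₀}) →
      K + 1 ≤ (f^[K] {i₀}).card := by
    intro K
    induction K with
    | zero => intro _; simp
    | succ K ih =>
      intro h
      have h1 : K + 1 ≤ (f^[K] {i₀}).card := ih (fun k hk => h k (by omega))
      have h2 : f^[K] {i₀} ⊂ f^[K + 1] {i₀} := by
        rw [Function.iterate_succ_apply']
        refine Finset.ssubset_iff_subset_ne.mpr ⟨hsub _, ?_⟩
        have := h K (by omega)
        rw [Function.iterate_succ_apply'] at this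
        exact fun hcontra => this hcontra.symm
      have := Finset.card_lt_card h2
      omega
  have hex : ∃ k, k + 1 ≤ n ∧ f^[k + 1] {i₀} = f^[k] {i₀} := by
    by_contra hcon
    push_neg at hcon
    have hc := hcard n (fun k hk => hcon k (by omega))
    have hle : (f^[n] {i₀}).card ≤ n := by
      calc (f^[n] {i₀}).card ≤ (Finset.univ : Finset (Fin n)).card :=
        Finset.card_le_card (Finset.subset_univ _)
      _ = n := by simp
    omega
  obtain ⟨k, hkn, hfix⟩ := hex
  have hmono : ∀ m : ℕ, i₀ ∈ f^[m] {i₀} := by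
    intro m
    induction m with
    | zero => simp
    | succ m ih =>
      rw [Function.iterate_succ_apply']
      exact hsub _ ih
  have key : ∀ m : ℕ, ∀ j ∈ f^[m] {i₀}, ‖d i₀ - d j‖ ≤ (m : ℝ) * δ := by
    intro m
    induction m with
    | zero =>
      intro j hj
      simp only [Function.iterate_zero_apply, Finset.mem_singleton] at hj
      subst hj; simp
    | succ m ih =>
      intro j hj
      rw [Function.iterate_succ_apply', hmemf] at hj
      rcases hj with hj | ⟨i, hi, hij⟩
      · refine (ih j hj).trans ?_
        have : (m : ℝ) ≤ (m : ℝ) + 1 := by linarith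
        push_cast
        nlinarith
      · calc ‖d i₀ - d j‖ = dist (d i₀) (d j) := (dist_eq_norm _ _).symm
        _ ≤ dist (d i₀) (d i) + dist (d i) (d j) := dist_triangle _ _ _
        _ = ‖d i₀ - d i‖ + ‖d i - d j‖ := by rw [dist_eq_norm, dist_eq_norm]
        _ ≤ (m : ℝ) * δ + δ := add_le_add (ih i hi) hij
        _ = ((m : ℝ) + 1) * δ := by ring
        _ = ((m + 1 : ℕ) : ℝ) * δ := by push_cast; ring
  refine ⟨f^[k] {i₀}, hmono k, ?_, ?_⟩
  · intro j hj
    refine (key k j hj).trans ?_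
    have hk1 : (k : ℝ) ≤ (n : ℝ) - 1 := by
      have : (k : ℝ) + 1 ≤ (n : ℝ) := by exact_mod_cast hkn
      linarith
    nlinarith
  · intro j hj m hjm
    have h1 : m ∈ f (f^[k] {i₀}) := (hmemf _ m).mpr (Or.inr ⟨j, hj, hjm⟩)
    have h2 : f (f^[k] {i₀}) = f^[k + 1] {i₀} := (Function.iterate_succ_apply' f k _).symm
    rw [h2, hfix] at h1
    exact h1

lemma norm_le_of_sq_le {n : ℕ} (w u : Fin n → ℂ) (c : ℝ) (hc : 0 ≤ c)
    (h : ∑ i, ‖w i‖ ^ 2 ≤ c ^ 2 * ∑ i, ‖u i‖ ^ 2) : ‖toEuc w‖ ≤ c * ‖toEuc u‖ := by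
  rw [EuclideanSpace.norm_eq, EuclideanSpace.norm_eq]
  rw [← Real.sqrt_sq hc, ← Real.sqrt_mul (sq_nonneg c)]
  exact Real.sqrt_le_sqrt h

lemma core {n : ℕ} (hn : 0 < n) (d : Fin n → ℂ) (B : Matrix (Fin n) (Fin n) ℂ) (ε : ℝ)
    (hε : 0 ≤ ε) (hM : ∀ j, ∑ i, ‖(d i - d j) * B i j‖ ^ 2 ≤ ε ^ 2) (i₀ : Fin n) :
    ∃ (u : EuclideanSpace ℂ (Fin n)) (μ : ℂ), ‖u‖ = 1 ∧
      ‖toEuc ((Matrix.diagonal d).mulVec u) - d i₀ • u‖ ≤ n * Real.sqrt (ε / 2) ∧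
      ‖toEuc (B.mulVec u) - μ • u‖ ≤ n * Real.sqrt (ε / 2) := by
  classical
  set r := Real.sqrt (ε / 2) with hr
  have hr0 : 0 ≤ r := Real.sqrt_nonneg _
  have hrε : ε = 2 * r ^ 2 := by
    rw [hr, Real.sq_sqrt (by linarith)]; ring
  have hsn : (0:ℝ) < Real.sqrt n := Real.sqrt_pos.mpr (by exact_mod_cast hn)
  set δ := 2 * r / Real.sqrt n with hδdef
  have hδ0 : 0 ≤ δ := by positivity
  obtain ⟨S, hS0, hSdist, hSclosed⟩ := cluster hn d δ hδ0 i₀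
  have hn1 : (1:ℝ) ≤ n := by exact_mod_cast hn
  have hsq : Real.sqrt n ^ 2 = n := Real.sq_sqrt (by positivity)
  have hkey : ((n:ℝ) - 1) * δ ≤ n * r := by
    have h2 : 4 * ((n:ℝ) - 1) ^ 2 ≤ (n:ℝ) ^ 3 := by
      nlinarith [mul_nonneg (sub_nonneg.mpr hn1) (sq_nonneg ((n:ℝ) - 2)), sq_nonneg (n:ℝ)]
    have h3 : 2 * ((n:ℝ) - 1) ≤ (n:ℝ) * Real.sqrt n := by
      have ha : (0:ℝ) ≤ 2 * ((n:ℝ) - 1) := by linarith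
      have hb : (0:ℝ) ≤ (n:ℝ) * Real.sqrt n := by positivity
      have hsq2 : (2 * ((n:ℝ) - 1)) ^ 2 ≤ ((n:ℝ) * Real.sqrt n) ^ 2 := by
        have hexp : ((n:ℝ) * Real.sqrt n) ^ 2 = (n:ℝ) ^ 2 * Real.sqrt n ^ 2 := mul_pow _ _ 2
        rw [hexp, hsq]; nlinarith
      calc 2 * ((n:ℝ) - 1) = Real.sqrt ((2 * ((n:ℝ) - 1)) ^ 2) := (Real.sqrt_sq ha).symm
      _ ≤ Real.sqrt (((n:ℝ) * Real.sqrt n) ^ 2) := Real.sqrt_le_sqrt hsq2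
      _ = (n:ℝ) * Real.sqrt n := Real.sqrt_sq hb
    rw [hδdef, mul_div_assoc', div_le_iff₀ hsn]
    nlinarith [mul_le_mul_of_nonneg_right h3 hr0]
  have hgap : ∀ i, i ∉ S → ∀ j ∈ S, δ < ‖d i - d j‖ := by
    intro i hi j hj
    by_contra hcon
    push_neg at hcon
    exact hi (hSclosed j hj i (by rwa [norm_sub_rev]))
  have hScard : 0 < S.card := Finset.card_pos.mpr ⟨i₀, hS0⟩
  set m := S.card with hm
  set e := S.equivFin with he
  set σ : Fin m → Fin n := fun a => ((e.symm a : {x // x ∈ S}) : Fin n) with hσ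
  set B₀ : Matrix (Fin m) (Fin m) ℂ := Matrix.of (fun a c => B (σ a) (σ c)) with hB₀
  haveI : Nonempty (Fin m) := Fin.pos_iff_nonempty.mp hScard
  obtain ⟨μ, hμ⟩ := Module.End.exists_eigenvalue B₀.mulVecLin
  obtain ⟨v, hv⟩ := hμ.exists_hasEigenvector
  have hv1 : B₀.mulVec v = μ • v := by
    have h := Module.End.mem_eigenspace_iff.mp hv.1
    simpa [Matrix.mulVecLin_apply] using h
  set u₀ : Fin n → ℂ := fun i => if h : i ∈ S then v (e ⟨i, h⟩) else 0 with hu₀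
  have hu₀mem : ∀ i (h : i ∈ S), u₀ i = v (e ⟨i, h⟩) := fun i h => dif_pos h
  have hu₀σ : ∀ a, u₀ (σ a) = v a := by
    intro a
    have hmem : σ a ∈ S := (e.symm a).2
    have hsub : (⟨σ a, hmem⟩ : {x // x ∈ S}) = e.symm a := Subtype.ext rfl
    rw [hu₀mem (σ a) hmem, hsub, Equiv.apply_symm_apply]
  have hu₀0 : ∀ i, i ∉ S → u₀ i = 0 := fun i h => dif_neg h
  have hsum : ∀ f : Fin n → ℂ, ∑ j, f j * u₀ j = ∑ a : Fin m, f (σ a) * v a := by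
    intro f
    rw [← Finset.sum_subset (Finset.subset_univ S)
      (fun j _ hj => by rw [hu₀0 j hj, mul_zero])]
    rw [← Finset.sum_coe_sort S (fun j => f j * u₀ j)]
    refine Fintype.sum_equiv e (fun x => f x * u₀ x) (fun a => f (σ a) * v a) ?_
    intro x
    show f (x : Fin n) * u₀ (x : Fin n) = f (σ (e x)) * v (e x)
    have h1 : σ (e x) = (x : Fin n) := by rw [hσ]; simp
    rw [h1, hu₀mem (x : Fin n) x.2]
  set N2 := ∑ j, ‖u₀ j‖ ^ 2 with hN2
  have hN2nonneg : 0 ≤ N2 := Finset.sum_nonneg fun j _ => sq_nonneg _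
  have hnr0 : 0 ≤ (n:ℝ) * r := by positivity
  -- Bound 1
  set w1 : Fin n → ℂ := fun i => (d i - d i₀) * u₀ i with hw1
  have hw1eq : toEuc ((Matrix.diagonal d).mulVec u₀) - d i₀ • toEuc u₀ = toEuc w1 := by
    ext i
    show (Matrix.diagonal d).mulVec u₀ i - d i₀ * u₀ i = (d i - d i₀) * u₀ i
    rw [Matrix.mulVec_diagonal]
    ring
  have hbound1 : ∑ i, ‖w1 i‖ ^ 2 ≤ ((n:ℝ) * r) ^ 2 * N2 := by
    have hb1 : ∀ i, ‖w1 i‖ ^ 2 ≤ (((n:ℝ) - 1) * δ) ^ 2 * ‖u₀ i‖ ^ 2 := by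
      intro i
      by_cases hi : i ∈ S
      · have hd : ‖d i - d i₀‖ ≤ ((n:ℝ) - 1) * δ := by
          rw [norm_sub_rev]; exact hSdist i hi
        calc ‖w1 i‖ ^ 2 = ‖d i - d i₀‖ ^ 2 * ‖u₀ i‖ ^ 2 := by
              rw [hw1]; rw [norm_mul, mul_pow]
        _ ≤ (((n:ℝ) - 1) * δ) ^ 2 * ‖u₀ i‖ ^ 2 :=
            mul_le_mul_of_nonneg_right (pow_le_pow_left₀ (norm_nonneg _) hd 2) (sq_nonneg _)
      · have : w1 i = 0 := by rw [hw1]; simp [hu₀0 i hi]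
        rw [this, norm_zero, zero_pow (two_ne_zero)]
        positivity
    calc ∑ i, ‖w1 i‖ ^ 2 ≤ ∑ i, (((n:ℝ) - 1) * δ) ^ 2 * ‖u₀ i‖ ^ 2 :=
          Finset.sum_le_sum fun i _ => hb1 i
    _ = (((n:ℝ) - 1) * δ) ^ 2 * N2 := by rw [← Finset.mul_sum]
    _ ≤ ((n:ℝ) * r) ^ 2 * N2 := by
        refine mul_le_mul_of_nonneg_right ?_ hN2nonneg
        exact pow_le_pow_left₀ (mul_nonneg (by linarith) hδ0) hkey 2
  -- Bound 2
  have hin : ∀ i (h : i ∈ S), B.mulVec u₀ i = μ * u₀ i := by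
    intro i h
    have h1 : B.mulVec u₀ i = ∑ j, B i j * u₀ j := rfl
    rw [h1, hsum (fun j => B i j)]
    have hσa : σ (e ⟨i, h⟩) = i := by rw [hσ]; simp
    have h2 : ∀ a, B i (σ a) = B₀ (e ⟨i, h⟩) a := by
      intro a
      rw [hB₀]
      show B i (σ a) = B (σ (e ⟨i, h⟩)) (σ a)
      rw [hσa]
    have h3 : ∑ a : Fin m, B i (σ a) * v a = B₀.mulVec v (e ⟨i, h⟩) := by
      rw [show B₀.mulVec v (e ⟨i, h⟩) = ∑ a, B₀ (e ⟨i, h⟩) a * v a from rfl]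
      exact Finset.sum_congr rfl fun a _ => by rw [h2 a]
    rw [h3, hv1]
    show μ * v (e ⟨i, h⟩) = μ * u₀ i
    rw [hu₀mem i h]
  set w2 : Fin n → ℂ := fun i => if i ∈ S then 0 else B.mulVec u₀ i with hw2
  have hw2eq : toEuc (B.mulVec u₀) - μ • toEuc u₀ = toEuc w2 := by
    ext i
    show B.mulVec u₀ i - μ * u₀ i = w2 i
    by_cases hi : i ∈ S
    · rw [hin i hi, hw2]; simp [hi]
    · rw [hw2]; simp [hi, hu₀0 i hi]
  set G : Fin n → Fin n → ℝ := fun i j => if i ∉ S ∧ j ∈ S then ‖B i j‖ ^ 2 else 0 with hG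
  have hGnonneg : ∀ i j, 0 ≤ G i j := by
    intro i j; rw [hG]; dsimp only; split
    · positivity
    · exact le_rfl
  set F2 := ∑ i, ∑ j, G i j with hF2
  have hrow : ∀ i, i ∉ S → ‖w2 i‖ ^ 2 ≤ (∑ j, G i j) * N2 := by
    intro i hi
    have h1 : w2 i = ∑ j, B i j * u₀ j := by rw [hw2]; simp [hi]; rfl
    have h2 : ‖w2 i‖ ≤ ∑ j, (if j ∈ S then ‖B i j‖ else 0) * ‖u₀ j‖ := by
      rw [h1]
      refine (norm_sum_le _ _).trans (Finset.sum_le_sum fun j _ => ?_)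
      by_cases hj : j ∈ S
      · rw [if_pos hj, norm_mul]
      · rw [hu₀0 j hj]; simp
    have h4 : ‖w2 i‖ ^ 2 ≤ (∑ j, (if j ∈ S then ‖B i j‖ else 0) * ‖u₀ j‖) ^ 2 :=
      pow_le_pow_left₀ (norm_nonneg _) h2 2
    have h3 := Finset.sum_mul_sq_le_sq_mul_sq Finset.univ
      (fun j => if j ∈ S then ‖B i j‖ else 0) (fun j => ‖u₀ j‖)
    refine h4.trans (h3.trans ?_)
    have heq : (∑ j, (if j ∈ S then ‖B i j‖ else 0) ^ 2) = ∑ j, G i j := by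
      refine Finset.sum_congr rfl fun j _ => ?_
      rw [hG]
      by_cases hj : j ∈ S
      · simp [hj, hi]
      · simp [hj]
    rw [heq]
  have hsum2 : ∑ i, ‖w2 i‖ ^ 2 ≤ F2 * N2 := by
    rw [hF2, Finset.sum_mul]
    refine Finset.sum_le_sum fun i _ => ?_
    by_cases hi : i ∈ S
    · have : w2 i = 0 := by rw [hw2]; simp [hi]
      rw [this, norm_zero]
      have : (0:ℝ) ≤ (∑ j, G i j) * N2 :=
        mul_nonneg (Finset.sum_nonneg fun j _ => hGnonneg i j) hN2nonneg
      simpa using this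
    · exact hrow i hi
  have hF2' : δ ^ 2 * F2 ≤ (n:ℝ) * ε ^ 2 := by
    have hswap : δ ^ 2 * F2 = ∑ j, ∑ i, δ ^ 2 * G i j := by
      rw [hF2, Finset.mul_sum]
      rw [Finset.sum_comm]
      exact Finset.sum_congr rfl fun j _ => by rw [Finset.mul_sum]
    rw [hswap]
    have hcol : ∀ j, ∑ i, δ ^ 2 * G i j ≤ ε ^ 2 := by
      intro j
      by_cases hj : j ∈ S
      · refine le_trans ?_ (hM j)
        refine Finset.sum_le_sum fun i _ => ?_
        rw [hG]
        by_cases hi : i ∈ S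
        · simp only [hi, not_true_eq_false, false_and, if_false, mul_zero]
          positivity
        · simp only [hi, not_false_eq_true, true_and, hj, if_true]
          rw [norm_mul, mul_pow]
          exact mul_le_mul_of_nonneg_right
            (pow_le_pow_left₀ hδ0 (hgap i hi j hj).le 2) (sq_nonneg _)
      · have : ∀ i, δ ^ 2 * G i j = 0 := by
          intro i; rw [hG]; simp [hj]
        rw [Finset.sum_congr rfl fun i _ => this i]
        simp
        positivity
    calc ∑ j, ∑ i, δ ^ 2 * G i j ≤ ∑ _j : Fin n, ε ^ 2 :=
          Finset.sum_le_sum fun j _ => hcol j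
    _ = (n:ℝ) * ε ^ 2 := by rw [Finset.sum_const]; simp [mul_comm]
  have hF2final : F2 ≤ ((n:ℝ) * r) ^ 2 := by
    by_cases hε0 : ε = 0
    · have hzero : ∀ i j, G i j = 0 := by
        intro i j
        rw [hG]
        by_cases hij : i ∉ S ∧ j ∈ S
        · simp only [hij, if_true]
          have h1 := hM j
          rw [hε0] at h1
          have h2 : ∀ k, ‖(d k - d j) * B k j‖ ^ 2 = 0 := by
            have hnn : ∀ k ∈ Finset.univ, (0:ℝ) ≤ ‖(d k - d j) * B k j‖ ^ 2 :=
              fun k _ => sq_nonneg _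
            intro k
            have := (Finset.sum_eq_zero_iff_of_nonneg hnn).mp
              (le_antisymm (by simpa using h1) (Finset.sum_nonneg hnn))
            exact this k (Finset.mem_univ k)
          have h3 : (d i - d j) * B i j = 0 := by
            have := h2 i
            rwa [pow_eq_zero_iff (by norm_num), norm_eq_zero] at this
          have h4 : d i - d j ≠ 0 := by
            have := hgap i hij.1 j hij.2
            intro hcon
            rw [hcon] at this
            simp at this
            linarith [hδ0]
          have h5 : B i j = 0 := by
            rcases mul_eq_zero.mp h3 with h | h
            · exact absurd h h4
            · exact h
          rw [h5]; simp
        · simp [hij]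
      have : F2 = 0 := by
        rw [hF2]
        exact Finset.sum_eq_zero fun i _ => Finset.sum_eq_zero fun j _ => hzero i j
      rw [this]; positivity
    · have hεpos : 0 < ε := lt_of_le_of_ne hε (Ne.symm hε0)
      have hrpos : 0 < r := by rw [hr]; exact Real.sqrt_pos.mpr (by linarith)
      have hδpos : 0 < δ := by rw [hδdef]; positivity
      have heq : (n:ℝ) * ε ^ 2 = δ ^ 2 * ((n:ℝ) * r) ^ 2 := by
        rw [hrε, hδdef, div_pow, hsq]
        field_simp
      have := hF2'.trans_eq heq
      exact le_of_mul_le_mul_left this (by positivity)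
  have hbound2 : ∑ i, ‖w2 i‖ ^ 2 ≤ ((n:ℝ) * r) ^ 2 * N2 :=
    hsum2.trans (mul_le_mul_of_nonneg_right hF2final hN2nonneg)
  -- Assemble
  have hw1norm : ‖toEuc ((Matrix.diagonal d).mulVec u₀) - d i₀ • toEuc u₀‖
      ≤ ((n:ℝ) * r) * ‖toEuc u₀‖ := by
    rw [hw1eq]
    exact norm_le_of_sq_le w1 u₀ _ hnr0 hbound1
  have hw2norm : ‖toEuc (B.mulVec u₀) - μ • toEuc u₀‖ ≤ ((n:ℝ) * r) * ‖toEuc u₀‖ := by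
    rw [hw2eq]
    exact norm_le_of_sq_le w2 u₀ _ hnr0 hbound2
  have hu₀ne : toEuc u₀ ≠ 0 := by
    obtain ⟨a, ha⟩ := Function.ne_iff.mp hv.2
    intro hcon
    apply ha
    have h0 : u₀ = 0 := congrArg WithLp.ofLp hcon
    have := hu₀σ a
    rw [h0] at this
    simpa using this.symm
  have hnorm_ne : ‖toEuc u₀‖ ≠ 0 := norm_ne_zero_iff.mpr hu₀ne
  set c : ℂ := (‖toEuc u₀‖ : ℝ)⁻¹ with hc
  have hcnorm : ‖c‖ = ‖toEuc u₀‖⁻¹ := by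
    rw [hc]
    rw [show ((‖toEuc u₀‖ : ℝ)⁻¹ : ℂ) = ((‖toEuc u₀‖⁻¹ : ℝ) : ℂ) by push_cast; ring]
    rw [Complex.norm_real]
    exact abs_of_nonneg (by positivity)
  have hcu : ‖c‖ * ‖toEuc u₀‖ = 1 := by
    rw [hcnorm]
    exact inv_mul_cancel₀ hnorm_ne
  refine ⟨c • toEuc u₀, μ, ?_, ?_, ?_⟩
  · rw [norm_smul, hcu]
  · have heq2 : toEuc ((Matrix.diagonal d).mulVec (c • toEuc u₀)) - d i₀ • (c • toEuc u₀)
        = c • (toEuc ((Matrix.diagonal d).mulVec u₀) - d i₀ • toEuc u₀) := by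
      rw [smul_sub]
      congr 1
      · show toEuc ((Matrix.diagonal d).mulVec (c • u₀)) = c • toEuc ((Matrix.diagonal d).mulVec u₀)
        rw [Matrix.mulVec_smul]
        rfl
      · rw [smul_comm]
    rw [WithLp.ofLp_smul, heq2, norm_smul]
    calc ‖c‖ * ‖toEuc ((Matrix.diagonal d).mulVec u₀) - d i₀ • toEuc u₀‖
        ≤ ‖c‖ * (((n:ℝ) * r) * ‖toEuc u₀‖) := mul_le_mul_of_nonneg_left hw1norm (norm_nonneg c)
    _ = ((n:ℝ) * r) * (‖c‖ * ‖toEuc u₀‖) := by ring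
    _ = (n:ℝ) * r := by rw [hcu, mul_one]
  · have heq2 : toEuc (B.mulVec (c • toEuc u₀)) - μ • (c • toEuc u₀)
        = c • (toEuc (B.mulVec u₀) - μ • toEuc u₀) := by
      rw [smul_sub]
      congr 1
      · show toEuc (B.mulVec (c • u₀)) = c • toEuc (B.mulVec u₀)
        rw [Matrix.mulVec_smul]
        rfl
      · rw [smul_comm]
    rw [WithLp.ofLp_smul, heq2, norm_smul]
    calc ‖c‖ * ‖toEuc (B.mulVec u₀) - μ • toEuc u₀‖
        ≤ ‖c‖ * (((n:ℝ) * r) * ‖toEuc u₀‖) := mul_le_mul_of_nonneg_left hw2norm (norm_nonneg c)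
    _ = ((n:ℝ) * r) * (‖c‖ * ‖toEuc u₀‖) := by ring
    _ = (n:ℝ) * r := by rw [hcu, mul_one]

end Stmt17

open Stmt17 in
/-- Shared approximate eigenvector: if `A` is normal, `‖[A,B]‖ ≤ ε`, and `λ` is an
eigenvalue of `A`, then there are a unit vector `u` and `μ : ℂ` with
`‖Au - λu‖ ≤ n√(ε/2)` and `‖Bu - μu‖ ≤ n√(ε/2)`. -/
theorem stmt_17 (n : ℕ) (A B : Matrix (Fin n) (Fin n) ℂ) (ε : ℝ)
    (hA : A * Aᴴ = Aᴴ * A)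
    (hcomm : ‖A * B - B * A‖ ≤ ε)
    (lam : ℂ) (hlam : Module.End.HasEigenvalue A.mulVecLin lam) :
    ∃ (u : EuclideanSpace ℂ (Fin n)) (μ : ℂ), ‖u‖ = 1 ∧
      ‖toEuc (A.mulVec u) - lam • u‖ ≤ n * Real.sqrt (ε / 2) ∧
      ‖toEuc (B.mulVec u) - μ • u‖ ≤ n * Real.sqrt (ε / 2) := by
  classical
  rcases Nat.eq_zero_or_pos n with hn0 | hn
  · obtain ⟨x, hx⟩ := hlam.exists_hasEigenvector
    refine absurd ?_ hx.2
    subst hn0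
    exact Subsingleton.elim x 0
  have hε : 0 ≤ ε := le_trans (norm_nonneg _) hcomm
  set T := Matrix.toEuclideanLin A with hT
  set TB := Matrix.toEuclideanLin B with hTB
  have hnormal : T ∘ₗ LinearMap.adjoint T = LinearMap.adjoint T ∘ₗ T := by
    rw [← Matrix.toEuclideanLin_conjTranspose_eq_adjoint]
    apply LinearMap.ext
    intro x
    show toEuc (A.mulVec (Aᴴ.mulVec x)) = toEuc (Aᴴ.mulVec (A.mulVec x))
    rw [Matrix.mulVec_mulVec, Matrix.mulVec_mulVec, hA]
  obtain ⟨b, d, hbd⟩ := normal_exists_onb T finrank_euclideanSpace_fin hnormal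
  -- generic change-of-basis lemma
  have hact : ∀ (M : Matrix (Fin n) (Fin n) ℂ)
      (S : EuclideanSpace ℂ (Fin n) →ₗ[ℂ] EuclideanSpace ℂ (Fin n)),
      (∀ j, b.repr (S (b j)) = toEuc (fun i => M i j)) →
      ∀ y : EuclideanSpace ℂ (Fin n), b.repr (S (b.repr.symm y)) = toEuc (M.mulVec y) := by
    intro M S hMS y
    have hy : (b.repr.symm y : EuclideanSpace ℂ (Fin n)) = ∑ j, y j • b j :=
      (b.sum_repr_symm y).symm
    rw [hy, map_sum, map_sum]
    simp only [map_smul, hMS]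
    ext i
    calc (∑ j, y j • toEuc (fun i' => M i' j)) i
        = ∑ j, (y j • toEuc (fun i' => M i' j)) i := by rw [WithLp.ofLp_sum, Finset.sum_apply]
    _ = ∑ j, M i j * y j := Finset.sum_congr rfl fun j _ => by
        show y j * M i j = M i j * y j; ring
    _ = M.mulVec y i := rfl
  have hdiagact : ∀ y : EuclideanSpace ℂ (Fin n),
      b.repr (T (b.repr.symm y)) = toEuc ((Matrix.diagonal d).mulVec y) := by
    apply hact
    intro j
    rw [hbd j, map_smul, OrthonormalBasis.repr_self]
    ext i
    show d j * EuclideanSpace.single j (1:ℂ) i = Matrix.diagonal d i j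
    rw [EuclideanSpace.single_apply, Matrix.diagonal_apply]
    by_cases h : i = j
    · subst h; simp
    · simp [h]
  set Bm : Matrix (Fin n) (Fin n) ℂ :=
    Matrix.of (fun i j => b.repr (TB (b j)) i) with hBm
  have hBact : ∀ y : EuclideanSpace ℂ (Fin n),
      b.repr (TB (b.repr.symm y)) = toEuc (Bm.mulVec y) := by
    apply hact
    intro j
    ext i
    rfl
  -- lam is a diagonal entry
  obtain ⟨x, hx⟩ := hlam.exists_hasEigenvector
  have hx1 : A.mulVec x = lam • x := by
    have h := Module.End.mem_eigenspace_iff.mp hx.1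
    simpa [Matrix.mulVecLin_apply] using h
  set y0 : EuclideanSpace ℂ (Fin n) := b.repr (toEuc x) with hy0
  have hy0ne : y0 ≠ 0 := by
    intro hcon
    apply hx.2
    rw [hy0] at hcon
    have h2 := congrArg b.repr.symm hcon
    rw [b.repr.symm_apply_apply] at h2
    have h3 : toEuc x = 0 := by simpa using h2
    exact congrArg WithLp.ofLp h3
  have hDy0 : toEuc ((Matrix.diagonal d).mulVec y0) = lam • y0 := by
    have h1 := hdiagact y0
    have h2 : b.repr.symm y0 = toEuc x := by rw [hy0]; exact b.repr.symm_apply_apply _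
    rw [h2] at h1
    have h3 : T (toEuc x) = lam • toEuc x := by
      show toEuc (A.mulVec x) = lam • toEuc x
      rw [hx1]; rfl
    rw [h3, map_smul] at h1
    rw [← h1]
  obtain ⟨i₀, hi₀⟩ : ∃ i, y0 i ≠ 0 := by
    by_contra hcon
    push_neg at hcon
    apply hy0ne
    ext i
    exact hcon i
  have hlam_eq : d i₀ = lam := by
    have h1 : toEuc ((Matrix.diagonal d).mulVec y0) i₀ = (lam • y0) i₀ :=
      congrArg (fun v : EuclideanSpace ℂ (Fin n) => v i₀) hDy0
    have h2 : toEuc ((Matrix.diagonal d).mulVec y0) i₀ = d i₀ * y0 i₀ :=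
      Matrix.mulVec_diagonal d y0 i₀
    have h3 : (lam • y0) i₀ = lam * y0 i₀ := rfl
    rw [h2, h3] at h1
    exact mul_right_cancel₀ hi₀ h1
  -- commutator bound in the eigenbasis
  set Mc : Matrix (Fin n) (Fin n) ℂ :=
    Matrix.diagonal d * Bm - Bm * Matrix.diagonal d with hMc
  have hnormMc : ∀ z : EuclideanSpace ℂ (Fin n), ‖toEuc (Mc.mulVec z)‖ ≤ ε * ‖z‖ := by
    intro z
    have e1 : toEuc (Mc.mulVec z)
        = b.repr (T (TB (b.repr.symm z))) - b.repr (TB (T (b.repr.symm z))) := by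
      have hz1 : b.repr.symm (toEuc (Bm.mulVec z)) = TB (b.repr.symm z) := by
        have h := congrArg b.repr.symm (hBact z)
        rw [b.repr.symm_apply_apply] at h
        exact h.symm
      have hz2 : b.repr.symm (toEuc ((Matrix.diagonal d).mulVec z)) = T (b.repr.symm z) := by
        have h := congrArg b.repr.symm (hdiagact z)
        rw [b.repr.symm_apply_apply] at h
        exact h.symm
      have s1 : toEuc ((Matrix.diagonal d).mulVec (Bm.mulVec z))
          = b.repr (T (TB (b.repr.symm z))) := by
        have := hdiagact (toEuc (Bm.mulVec z))
        rw [hz1] at this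
        exact this.symm
      have s2 : toEuc (Bm.mulVec ((Matrix.diagonal d).mulVec z))
          = b.repr (TB (T (b.repr.symm z))) := by
        have := hBact (toEuc ((Matrix.diagonal d).mulVec z))
        rw [hz2] at this
        exact this.symm
      calc toEuc (Mc.mulVec z)
          = toEuc ((Matrix.diagonal d).mulVec (Bm.mulVec z))
            - toEuc (Bm.mulVec ((Matrix.diagonal d).mulVec z)) := by
            rw [hMc]
            show toEuc ((Matrix.diagonal d * Bm - Bm * Matrix.diagonal d).mulVec z) = _
            rw [Matrix.sub_mulVec, Matrix.mulVec_mulVec, Matrix.mulVec_mulVec]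
            rfl
      _ = _ := by rw [s1, s2]
    have e2 : T (TB (b.repr.symm z)) - TB (T (b.repr.symm z))
        = (EuclideanSpace.equiv (Fin n) ℂ).symm ((A * B - B * A) *ᵥ (b.repr.symm z)) := by
      have hmv : (A * B - B * A).mulVec (b.repr.symm z)
          = A.mulVec (B.mulVec (b.repr.symm z)) - B.mulVec (A.mulVec (b.repr.symm z)) := by
        rw [Matrix.sub_mulVec, Matrix.mulVec_mulVec, Matrix.mulVec_mulVec]
      show toEuc (A.mulVec (B.mulVec (b.repr.symm z)))
          - toEuc (B.mulVec (A.mulVec (b.repr.symm z)))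
          = toEuc ((A * B - B * A).mulVec (b.repr.symm z))
      rw [hmv]
      rfl
    rw [e1, ← map_sub, LinearIsometryEquiv.norm_map, e2]
    calc ‖(EuclideanSpace.equiv (Fin n) ℂ).symm ((A * B - B * A) *ᵥ (b.repr.symm z))‖
        ≤ ‖A * B - B * A‖ * ‖b.repr.symm z‖ := Matrix.l2_opNorm_mulVec _ _
    _ ≤ ε * ‖b.repr.symm z‖ := mul_le_mul_of_nonneg_right hcomm (norm_nonneg _)
    _ = ε * ‖z‖ := by rw [LinearIsometryEquiv.norm_map]
  have hMbound : ∀ j, ∑ i, ‖(d i - d j) * Bm i j‖ ^ 2 ≤ ε ^ 2 := by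
    intro j
    have hMc_entry : ∀ i, Mc i j = (d i - d j) * Bm i j := by
      intro i
      rw [hMc]
      show (Matrix.diagonal d * Bm) i j - (Bm * Matrix.diagonal d) i j = _
      rw [Matrix.diagonal_mul, Matrix.mul_diagonal]
      ring
    have hcol : Mc.mulVec (toEuc (Pi.single j 1)) = fun i => (d i - d j) * Bm i j := by
      show Mc.mulVec (Pi.single j 1) = _
      rw [Matrix.mulVec_single]
      funext i
      simp only [Pi.smul_apply, MulOpposite.op_one, one_smul, Matrix.col_apply]
      exact hMc_entry i
    have hz : ‖toEuc (Pi.single j (1:ℂ))‖ = 1 := by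
      rw [show toEuc (Pi.single j (1:ℂ)) = EuclideanSpace.single j 1 from rfl,
        EuclideanSpace.norm_single]
      norm_num
    have h1 := hnormMc (toEuc (Pi.single j 1))
    rw [hz, mul_one, hcol] at h1
    have h2 : ‖toEuc (fun i => (d i - d j) * Bm i j)‖
        = Real.sqrt (∑ i, ‖(d i - d j) * Bm i j‖ ^ 2) := EuclideanSpace.norm_eq _
    rw [h2] at h1
    calc ∑ i, ‖(d i - d j) * Bm i j‖ ^ 2
        = Real.sqrt (∑ i, ‖(d i - d j) * Bm i j‖ ^ 2) ^ 2 :=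
          (Real.sq_sqrt (Finset.sum_nonneg fun i _ => sq_nonneg _)).symm
    _ ≤ ε ^ 2 := pow_le_pow_left₀ (Real.sqrt_nonneg _) h1 2
  obtain ⟨u', μ, hu1, hu2, hu3⟩ := core hn d Bm ε hε hMbound i₀
  rw [hlam_eq] at hu2
  refine ⟨b.repr.symm u', μ, ?_, ?_, ?_⟩
  · rw [LinearIsometryEquiv.norm_map]; exact hu1
  · have key : toEuc (A.mulVec (b.repr.symm u')) - lam • b.repr.symm u'
        = b.repr.symm (toEuc ((Matrix.diagonal d).mulVec u') - lam • u') := by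
      rw [map_sub, map_smul]
      congr 1
      have h1 := hdiagact u'
      have h2 := congrArg b.repr.symm h1
      rw [b.repr.symm_apply_apply] at h2
      exact h2
    rw [key, LinearIsometryEquiv.norm_map]
    exact hu2
  · have key : toEuc (B.mulVec (b.repr.symm u')) - μ • b.repr.symm u'
        = b.repr.symm (toEuc (Bm.mulVec u') - μ • u') := by
      rw [map_sub, map_smul]
      congr 1
      have h1 := hBact u'
      have h2 := congrArg b.repr.symm h1
      rw [b.repr.symm_apply_apply] at h2
      exact h2
    rw [key, LinearIsometryEquiv.norm_map]
    exact hu3
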